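/- Let $H = \{x : x\cdot u \ge 0\}$ be a half space with reflection $R$ with respect to $\partial H$, and let $k$ be an increasing function on $[-1,1]$. For $x, y \in H \cap S^n$ and real-valued functions $f, g$ on $S^n$, one has $k(x\cdot y)(f(x)g(y) + f(Rx)g(Ry)) + k(Rx\cdot y)(f(Rx)g(y) + f(x)g(Ry)) \le k(x\cdot y)(f_H(x)g_H(y) + f_H(Rx)g_H(Ry)) + k(Rx\cdot y)(f_H(Rx)g_H(y) + f_H(x)g_H(Ry))$, with equality failing (strict inequality) if $k$ is strictly increasing, $x\cdot u > 0$, $y \cdot u > 0$, $f(x) > f(Rx)$, and $g(y) < g(Ry)$. -/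
import Mathlib


open Metric Set
open scoped RealInnerProductSpace

noncomputable section

variable {n : ℕ}

/-- Reflection with respect to the hyperplane `u^⊥`. -/
def reflHyp (u x : EuclideanSpace ℝ (Fin (n + 1))) : EuclideanSpace ℝ (Fin (n + 1)) :=
  x - (2 * ⟪x, u⟫) • u

/-- Two-point rearrangement of `f` with respect to the half space `H = {x : x·u ≥ 0}`. -/
def twoPtRearr (u : EuclideanSpace ℝ (Fin (n + 1)))
    (f : EuclideanSpace ℝ (Fin (n + 1)) → ℝ) (x : EuclideanSpace ℝ (Fin (n + 1))) : ℝ :=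
  if 0 ≤ ⟪x, u⟫ then max (f x) (f (reflHyp u x)) else min (f x) (f (reflHyp u x))

lemma inner_reflHyp_left (u x y : EuclideanSpace ℝ (Fin (n + 1))) :
    ⟪reflHyp u x, y⟫ = ⟪x, y⟫ - 2 * ⟪x, u⟫ * ⟪u, y⟫ := by
  rw [reflHyp, inner_sub_left, real_inner_smul_left, mul_assoc]

lemma inner_reflHyp_u (u : EuclideanSpace ℝ (Fin (n + 1))) (hu : ‖u‖ = 1)
    (x : EuclideanSpace ℝ (Fin (n + 1))) : ⟪reflHyp u x, u⟫ = -⟪x, u⟫ := by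
  have huu : ⟪u, u⟫ = 1 := by
    rw [real_inner_self_eq_norm_sq, hu]; norm_num
  rw [inner_reflHyp_left, huu]; ring

lemma reflHyp_invol (u : EuclideanSpace ℝ (Fin (n + 1))) (hu : ‖u‖ = 1)
    (x : EuclideanSpace ℝ (Fin (n + 1))) : reflHyp u (reflHyp u x) = x := by
  rw [reflHyp, inner_reflHyp_u u hu x, reflHyp]
  module

lemma norm_reflHyp (u : EuclideanSpace ℝ (Fin (n + 1))) (hu : ‖u‖ = 1)
    (x : EuclideanSpace ℝ (Fin (n + 1))) : ‖reflHyp u x‖ = ‖x‖ := by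
  have huu : ⟪u, u⟫ = 1 := by
    rw [real_inner_self_eq_norm_sq, hu]; norm_num
  have h : ⟪reflHyp u x, reflHyp u x⟫ = ⟪x, x⟫ := by
    rw [inner_reflHyp_left]
    rw [show (⟪x, reflHyp u x⟫ : ℝ) = ⟪reflHyp u x, x⟫ from real_inner_comm _ _,
      show (⟪u, reflHyp u x⟫ : ℝ) = ⟪reflHyp u x, u⟫ from real_inner_comm _ _,
      inner_reflHyp_left, inner_reflHyp_u u hu, real_inner_comm u x]
    ring
  have := congrArg Real.sqrt h
  rwa [real_inner_self_eq_norm_sq, real_inner_self_eq_norm_sq,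
    Real.sqrt_sq (norm_nonneg _), Real.sqrt_sq (norm_nonneg _)] at this

lemma key_ineq (c d a a' b b' : ℝ) (hcd : d ≤ c) :
    c * (a * b + a' * b') + d * (a' * b + a * b') ≤
      c * (max a a' * max b b' + min a a' * min b b') +
        d * (min a a' * max b b' + max a a' * min b b') := by
  rcases le_total a' a with h1 | h1 <;> rcases le_total b' b with h2 | h2
  · rw [max_eq_left h1, min_eq_right h1, max_eq_left h2, min_eq_right h2]
  · rw [max_eq_left h1, min_eq_right h1, max_eq_right h2, min_eq_left h2]
    nlinarith [mul_nonneg (mul_nonneg (sub_nonneg.2 hcd) (sub_nonneg.2 h1)) (sub_nonneg.2 h2)]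
  · rw [max_eq_right h1, min_eq_left h1, max_eq_left h2, min_eq_right h2]
    nlinarith [mul_nonneg (mul_nonneg (sub_nonneg.2 hcd) (sub_nonneg.2 h1)) (sub_nonneg.2 h2)]
  · rw [max_eq_right h1, min_eq_left h1, max_eq_right h2, min_eq_left h2]
    nlinarith

lemma key_strict (c d a a' b b' : ℝ) (hcd : d < c) (ha : a' < a) (hb : b < b') :
    c * (a * b + a' * b') + d * (a' * b + a * b') <
      c * (max a a' * max b b' + min a a' * min b b') +
        d * (min a a' * max b b' + max a a' * min b b') := by
  rw [max_eq_left ha.le, min_eq_right ha.le, max_eq_right hb.le, min_eq_left hb.le]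
  nlinarith [mul_pos (mul_pos (sub_pos.2 hcd) (sub_pos.2 ha)) (sub_pos.2 hb)]

/-- The pointwise two-point rearrangement inequality, with strictness when `k` is strictly
increasing, `x·u > 0`, `y·u > 0`, `f(x) > f(Rx)` and `g(y) < g(Ry)`. -/
theorem stmt_11 (u : EuclideanSpace ℝ (Fin (n + 1))) (hu : ‖u‖ = 1)
    (k : ℝ → ℝ) (hk : MonotoneOn k (Icc (-1 : ℝ) 1))
    (f g : EuclideanSpace ℝ (Fin (n + 1)) → ℝ)
    (x y : EuclideanSpace ℝ (Fin (n + 1)))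
    (hx : x ∈ sphere (0 : EuclideanSpace ℝ (Fin (n + 1))) 1)
    (hy : y ∈ sphere (0 : EuclideanSpace ℝ (Fin (n + 1))) 1)
    (hxu : 0 ≤ ⟪x, u⟫) (hyu : 0 ≤ ⟪y, u⟫) :
    (k ⟪x, y⟫ * (f x * g y + f (reflHyp u x) * g (reflHyp u y)) +
        k ⟪reflHyp u x, y⟫ * (f (reflHyp u x) * g y + f x * g (reflHyp u y)) ≤
      k ⟪x, y⟫ * (twoPtRearr u f x * twoPtRearr u g y +
          twoPtRearr u f (reflHyp u x) * twoPtRearr u g (reflHyp u y)) +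
        k ⟪reflHyp u x, y⟫ * (twoPtRearr u f (reflHyp u x) * twoPtRearr u g y +
          twoPtRearr u f x * twoPtRearr u g (reflHyp u y))) ∧
    (StrictMonoOn k (Icc (-1 : ℝ) 1) → 0 < ⟪x, u⟫ → 0 < ⟪y, u⟫ →
      f (reflHyp u x) < f x → g y < g (reflHyp u y) →
      k ⟪x, y⟫ * (f x * g y + f (reflHyp u x) * g (reflHyp u y)) +
          k ⟪reflHyp u x, y⟫ * (f (reflHyp u x) * g y + f x * g (reflHyp u y)) <
        k ⟪x, y⟫ * (twoPtRearr u f x * twoPtRearr u g y +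
            twoPtRearr u f (reflHyp u x) * twoPtRearr u g (reflHyp u y)) +
          k ⟪reflHyp u x, y⟫ * (twoPtRearr u f (reflHyp u x) * twoPtRearr u g y +
            twoPtRearr u f x * twoPtRearr u g (reflHyp u y))) := by
  rw [mem_sphere_zero_iff_norm] at hx hy
  have hRx : ‖reflHyp u x‖ = 1 := (norm_reflHyp u hu x).trans hx
  have hRy : ‖reflHyp u y‖ = 1 := (norm_reflHyp u hu y).trans hy
  have hm1 : ⟪x, y⟫ ∈ Icc (-1 : ℝ) 1 := by
    have := abs_real_inner_le_norm x y
    rw [hx, hy] at this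
    constructor <;> [linarith [neg_abs_le (⟪x, y⟫ : ℝ)]; linarith [le_abs_self (⟪x, y⟫ : ℝ)]]
  have hm2 : ⟪reflHyp u x, y⟫ ∈ Icc (-1 : ℝ) 1 := by
    have := abs_real_inner_le_norm (reflHyp u x) y
    rw [hRx, hy] at this
    constructor <;>
      [linarith [neg_abs_le (⟪reflHyp u x, y⟫ : ℝ)]; linarith [le_abs_self (⟪reflHyp u x, y⟫ : ℝ)]]
  have hle : ⟪reflHyp u x, y⟫ ≤ ⟪x, y⟫ := by
    rw [inner_reflHyp_left, real_inner_comm y u]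
    nlinarith [mul_nonneg hxu hyu]
  have hcd : k ⟪reflHyp u x, y⟫ ≤ k ⟪x, y⟫ := hk hm2 hm1 hle
  have hA : twoPtRearr u f x = max (f x) (f (reflHyp u x)) := by
    rw [twoPtRearr, if_pos hxu]
  have hB : twoPtRearr u g y = max (g y) (g (reflHyp u y)) := by
    rw [twoPtRearr, if_pos hyu]
  have hA' : ∀ (h : EuclideanSpace ℝ (Fin (n + 1)) → ℝ) (z : EuclideanSpace ℝ (Fin (n + 1))),
      0 ≤ ⟪z, u⟫ → twoPtRearr u h (reflHyp u z) = min (h z) (h (reflHyp u z)) := by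
    intro h z hzu
    rcases lt_or_eq_of_le hzu with hz | hz
    · rw [twoPtRearr, if_neg (by rw [inner_reflHyp_u u hu]; linarith), reflHyp_invol u hu,
        min_comm]
    · have hfix : reflHyp u z = z := by
        rw [reflHyp, ← hz]
        simp
      rw [hfix, twoPtRearr, if_pos hzu, hfix, max_self, min_self]
  rw [hA, hB, hA' f x hxu, hA' g y hyu]
  constructor
  · exact key_ineq _ _ _ _ _ _ hcd
  · intro hks hxu' hyu' hf hg
    have hlt : ⟪reflHyp u x, y⟫ < ⟪x, y⟫ := by
      rw [inner_reflHyp_left, real_inner_comm y u]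
      nlinarith [mul_pos hxu' hyu']
    exact key_strict _ _ _ _ _ _ (hks hm2 hm1 hlt) hf hg
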